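/- Let Γ be a countable group and let P be a G_δ subset of Sub_[∞](Γ). Then HT(Γ) ∩ P is dense in P if and only if the following condition (*) holds: for every Λ ∈ P, every d ≥ 1, every g_1,…,g_{2d} ∈ Γ such that the cosets Λg_1,…,Λg_{2d} are pairwise distinct (i.e. g_i g_j^{-1} ∉ Λ for all i ≠ j), and every neighborhood V of Λ in Sub(Γ), there exist Λ' ∈ P ∩ V and γ ∈ Γ such that g_i γ g_{i+d}^{-1} ∈ Λ' for all i ∈ {1,…,d}. -/

import Mathlib

/-- The Chabauty topology on the space of subgroups of `Γ`: the topology induced by the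
injection `Sub(Γ) → {0,1}^Γ` (indicator functions), where `{0,1}^Γ` carries the product
of the discrete topologies. -/
instance chabauty (Γ : Type*) [Group Γ] : TopologicalSpace (Subgroup Γ) :=
  TopologicalSpace.induced (fun (H : Subgroup Γ) (g : Γ) => g ∈ H)
    (@Pi.topologicalSpace Γ (fun _ => Prop) (fun _ => ⊥))

/-- The space of right cosets `Λ\Γ`. -/
def rQuot {Γ : Type*} [Group Γ] (Λ : Subgroup Γ) : Type _ :=
  Quotient (QuotientGroup.rightRel Λ)

/-- The right-translation action of `Γ` on the right coset space `Λ\Γ`: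
`Λx · γ = Λxγ`. -/
def rAct {Γ : Type*} [Group Γ] (Λ : Subgroup Γ) (γ : Γ) : rQuot Λ → rQuot Λ :=
  Quotient.map' (fun x => x * γ) (by
    intro x y h
    rw [QuotientGroup.rightRel_apply] at h ⊢
    have key : y * γ * (x * γ)⁻¹ = y * x⁻¹ := by group
    rw [key]; exact h)

/-- The right-translation action of `Γ` on `Λ\Γ` is highly transitive: for every `d ≥ 1`,
any `d`-tuple of pairwise distinct cosets can be mapped to any other by some `γ ∈ Γ`. -/
def HTcoset {Γ : Type*} [Group Γ] (Λ : Subgroup Γ) : Prop :=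
  ∀ d : ℕ, 1 ≤ d → ∀ x y : Fin d → rQuot Λ,
    Function.Injective x → Function.Injective y →
    ∃ γ : Γ, ∀ i, rAct Λ γ (x i) = y i

/-- `HT(Γ)`: the set of infinite index subgroups `Λ ≤ Γ` whose right-translation action
on `Λ\Γ` is highly transitive. -/
def HTset (Γ : Type*) [Group Γ] : Set (Subgroup Γ) :=
  {Λ | Infinite (rQuot Λ) ∧ HTcoset Λ}

open Set Topology TopologicalSpace

namespace HTaux

variable {Γ : Type*} [Group Γ]

/-! ### Basic coset API -/

def mkQ (Λ : Subgroup Γ) (x : Γ) : rQuot Λ :=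
  @Quotient.mk'' Γ (QuotientGroup.rightRel Λ) x

theorem mkQ_eq {Λ : Subgroup Γ} {x y : Γ} : mkQ Λ x = mkQ Λ y ↔ y * x⁻¹ ∈ Λ := by
  show @Quotient.mk'' Γ (QuotientGroup.rightRel Λ) x = @Quotient.mk'' Γ (QuotientGroup.rightRel Λ) y ↔ _
  rw [Quotient.eq'']
  exact QuotientGroup.rightRel_apply

theorem rAct_mkQ (Λ : Subgroup Γ) (γ x : Γ) : rAct Λ γ (mkQ Λ x) = mkQ Λ (x * γ) := rfl

theorem mkQ_out {Λ : Subgroup Γ} (q : rQuot Λ) : mkQ Λ (Quotient.out q) = q :=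
  Quotient.out_eq q

/-! ### The Chabauty topology via `Γ → Bool` -/

theorem induced_bot_inj {α β : Type*} {f : α → β} (hf : Function.Injective f) :
    TopologicalSpace.induced f (⊥ : TopologicalSpace β) = ⊥ := by
  refine le_antisymm ?_ bot_le
  rw [TopologicalSpace.le_def]
  intro s _
  exact ⟨f '' s, trivial, Set.preimage_image_eq s hf⟩

noncomputable def chi (Λ : Subgroup Γ) : Γ → Bool :=
  fun g => @decide (g ∈ Λ) (Classical.propDecidable _)

theorem chi_apply_iff {Λ : Subgroup Γ} {g : Γ} : chi Λ g = true ↔ g ∈ Λ := by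
  simp [chi]

theorem inducing_chi : IsInducing (chi (Γ := Γ)) := by
  constructor
  show chabauty Γ = _
  unfold chabauty
  show TopologicalSpace.induced (fun (H : Subgroup Γ) (g : Γ) => g ∈ H)
      (⨅ g : Γ, TopologicalSpace.induced (fun f : Γ → Prop => f g) ⊥) =
    TopologicalSpace.induced chi
      (⨅ g : Γ, TopologicalSpace.induced (fun f : Γ → Bool => f g) instTopologicalSpaceBool)
  rw [induced_iInf, induced_iInf]
  refine iInf_congr fun g => ?_
  rw [induced_compose, induced_compose]
  have hbool : (instTopologicalSpaceBool : TopologicalSpace Bool) = ⊥ :=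
    DiscreteTopology.eq_bot
  have hprop : (⊥ : TopologicalSpace Prop) =
      TopologicalSpace.induced (fun p => @decide p (Classical.propDecidable p)) ⊥ := by
    refine (induced_bot_inj ?_).symm
    intro p q h
    exact propext (by simpa using h)
  rw [hbool, hprop, induced_compose]
  rfl

theorem chi_injective : Function.Injective (chi (Γ := Γ)) := by
  intro Λ Λ' h
  ext g
  rw [← chi_apply_iff, ← chi_apply_iff, h]

theorem isClosed_range_chi : IsClosed (Set.range (chi (Γ := Γ))) := by
  have hrange : Set.range (chi (Γ := Γ)) =
      {b : Γ → Bool | b 1 = true} ∩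
        ({b | ∀ x y : Γ, b x = true → b y = true → b (x * y) = true} ∩
          {b | ∀ x : Γ, b x = true → b x⁻¹ = true}) := by
    ext b
    constructor
    · rintro ⟨Λ, rfl⟩
      refine ⟨chi_apply_iff.2 Λ.one_mem, fun x y hx hy => ?_, fun x hx => ?_⟩
      · exact chi_apply_iff.2 (Λ.mul_mem (chi_apply_iff.1 hx) (chi_apply_iff.1 hy))
      · exact chi_apply_iff.2 (Λ.inv_mem (chi_apply_iff.1 hx))
    · rintro ⟨h1, hm, hi⟩
      refine ⟨{ carrier := {g | b g = true}
                one_mem' := h1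
                mul_mem' := fun ha hb => hm _ _ ha hb
                inv_mem' := fun ha => hi _ ha }, ?_⟩
      funext g
      show @decide (b g = true) (Classical.propDecidable _) = b g
      cases hbg : b g
      · exact @decide_eq_false (false = true) (Classical.propDecidable _) (by simp)
      · exact @decide_eq_true (true = true) (Classical.propDecidable _) rfl
  rw [hrange]
  have hset : ∀ x : Γ, {b : Γ → Bool | b x = true} =
      (fun b : Γ → Bool => b x) ⁻¹' {true} := by
    intro x; ext b; simp
  have hclosed : ∀ (x : Γ), IsClosed {b : Γ → Bool | b x = true} := fun x => by
    rw [hset x]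
    exact (isClosed_discrete ({true} : Set Bool)).preimage (continuous_apply x)
  have hopen : ∀ (x : Γ), IsOpen {b : Γ → Bool | b x = true} := fun x => by
    rw [hset x]
    exact (isOpen_discrete ({true} : Set Bool)).preimage (continuous_apply x)
  refine (hclosed 1).inter (IsClosed.inter ?_ ?_)
  · have : {b : Γ → Bool | ∀ x y : Γ, b x = true → b y = true → b (x * y) = true} =
        ⋂ (x : Γ), ⋂ (y : Γ),
          ({b : Γ → Bool | b x = true}ᶜ ∪ ({b | b y = true}ᶜ ∪ {b | b (x * y) = true})) := by
      ext b
      simp only [Set.mem_setOf_eq, Set.mem_iInter, Set.mem_union, Set.mem_compl_iff]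
      refine forall_congr' fun x => forall_congr' fun y => ?_
      tauto
    rw [this]
    exact isClosed_iInter fun x => isClosed_iInter fun y =>
      (((hopen x).isClosed_compl).union (((hopen y).isClosed_compl).union (hclosed _)))
  · have : {b : Γ → Bool | ∀ x : Γ, b x = true → b x⁻¹ = true} =
        ⋂ (x : Γ), ({b : Γ → Bool | b x = true}ᶜ ∪ {b | b x⁻¹ = true}) := by
      ext b
      simp only [Set.mem_setOf_eq, Set.mem_iInter, Set.mem_union, Set.mem_compl_iff]
      refine forall_congr' fun x => ?_
      tauto
    rw [this]
    exact isClosed_iInter fun x => ((hopen x).isClosed_compl).union (hclosed _)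

theorem closedEmbedding_chi : Topology.IsClosedEmbedding (chi (Γ := Γ)) :=
  ⟨⟨inducing_chi, chi_injective⟩, isClosed_range_chi⟩

theorem polish [Countable Γ] : PolishSpace (Subgroup Γ) :=
  haveI : PolishSpace (Γ → Bool) := {}
  closedEmbedding_chi.polishSpace

theorem isClopen_memSet (x : Γ) : IsClopen {Λ : Subgroup Γ | x ∈ Λ} := by
  have : {Λ : Subgroup Γ | x ∈ Λ} =
      chi ⁻¹' ((fun b : Γ → Bool => b x) ⁻¹' {true}) := by
    ext Λ
    simp [chi_apply_iff]
  rw [this]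
  have hc := inducing_chi (Γ := Γ) |>.continuous
  exact ⟨((isClosed_discrete ({true} : Set Bool)).preimage (continuous_apply x)).preimage hc,
    ((isOpen_discrete ({true} : Set Bool)).preimage (continuous_apply x)).preimage hc⟩

/-! ### Clopen/open/Gδ sets of subgroups -/

/-- The condition that the cosets of `g` and of `h` are pairwise distinct and the two
families of cosets are disjoint. -/
def goodPair (d : ℕ) (g h : Fin d → Γ) (Λ : Subgroup Γ) : Prop :=
  (∀ i j, i ≠ j → g i * (g j)⁻¹ ∉ Λ) ∧ (∀ i j, i ≠ j → h i * (h j)⁻¹ ∉ Λ) ∧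
    (∀ i j, g i * (h j)⁻¹ ∉ Λ)

theorem isClopen_pairSet (d : ℕ) (g : Fin d → Γ) :
    IsClopen {Λ : Subgroup Γ | ∀ i j, i ≠ j → g i * (g j)⁻¹ ∉ Λ} := by
  have : {Λ : Subgroup Γ | ∀ i j, i ≠ j → g i * (g j)⁻¹ ∉ Λ} =
      ⋂ (i) (j), {Λ : Subgroup Γ | i ≠ j → g i * (g j)⁻¹ ∉ Λ} := by
    ext Λ; simp
  rw [this]
  refine isClopen_iInter_of_finite fun i => isClopen_iInter_of_finite fun j => ?_
  by_cases hij : i = j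
  · have : {Λ : Subgroup Γ | i ≠ j → g i * (g j)⁻¹ ∉ Λ} = univ := by
      ext Λ; simp [hij]
    rw [this]; exact isClopen_univ
  · have : {Λ : Subgroup Γ | i ≠ j → g i * (g j)⁻¹ ∉ Λ} =
        {Λ : Subgroup Γ | g i * (g j)⁻¹ ∈ Λ}ᶜ := by
      ext Λ; simp [hij]
    rw [this]; exact (isClopen_memSet _).compl

theorem isClopen_crossSet (d : ℕ) (g h : Fin d → Γ) :
    IsClopen {Λ : Subgroup Γ | ∀ i j, g i * (h j)⁻¹ ∉ Λ} := by
  have : {Λ : Subgroup Γ | ∀ i j, g i * (h j)⁻¹ ∉ Λ} =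
      ⋂ (i) (j), {Λ : Subgroup Γ | g i * (h j)⁻¹ ∈ Λ}ᶜ := by
    ext Λ; simp
  rw [this]
  exact isClopen_iInter_of_finite fun i => isClopen_iInter_of_finite fun j =>
    (isClopen_memSet _).compl

theorem isClopen_goodPairSet (d : ℕ) (g h : Fin d → Γ) :
    IsClopen {Λ : Subgroup Γ | goodPair d g h Λ} := by
  have : {Λ : Subgroup Γ | goodPair d g h Λ} =
      {Λ : Subgroup Γ | ∀ i j, i ≠ j → g i * (g j)⁻¹ ∉ Λ} ∩
        ({Λ : Subgroup Γ | ∀ i j, i ≠ j → h i * (h j)⁻¹ ∉ Λ} ∩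
          {Λ : Subgroup Γ | ∀ i j, g i * (h j)⁻¹ ∉ Λ}) := by
    ext Λ; rfl
  rw [this]
  exact (isClopen_pairSet d g).inter ((isClopen_pairSet d h).inter (isClopen_crossSet d g h))

/-- The open set used in the Baire category argument. -/
def Oset (d : ℕ) (g h : Fin d → Γ) : Set (Subgroup Γ) :=
  {Λ | goodPair d g h Λ → ∃ γ : Γ, ∀ i, g i * γ * (h i)⁻¹ ∈ Λ}

theorem isOpen_Oset (d : ℕ) (g h : Fin d → Γ) : IsOpen (Oset d g h) := by
  have : Oset d g h = {Λ : Subgroup Γ | goodPair d g h Λ}ᶜ ∪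
      ⋃ γ : Γ, ⋂ i, {Λ : Subgroup Γ | g i * γ * (h i)⁻¹ ∈ Λ} := by
    ext Λ
    simp only [Oset, mem_setOf_eq, mem_union, mem_compl_iff, mem_iUnion, mem_iInter]
    tauto
  rw [this]
  refine ((isClopen_goodPairSet d g h).isClosed.isOpen_compl).union ?_
  exact isOpen_iUnion fun γ =>
    isOpen_iInter_of_finite fun i => (isClopen_memSet _).isOpen

/-- The set of infinite-index subgroups is `Gδ`. -/
theorem isGδ_Sinf : IsGδ {Λ : Subgroup Γ | Infinite (rQuot Λ)} := by
  have heq : {Λ : Subgroup Γ | Infinite (rQuot Λ)} =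
      ⋂ n : ℕ, ⋃ g : Fin n → Γ, {Λ : Subgroup Γ | ∀ i j, i ≠ j → g i * (g j)⁻¹ ∉ Λ} := by
    ext Λ
    simp only [mem_setOf_eq, mem_iInter, mem_iUnion]
    constructor
    · intro hinf n
      haveI := hinf
      let e : Fin n ↪ rQuot Λ := Fin.valEmbedding.trans (Infinite.natEmbedding _)
      refine ⟨fun i => Quotient.out (e i), fun i j hij hmem => ?_⟩
      apply hij
      apply e.injective
      have : mkQ Λ (Quotient.out (e j)) = mkQ Λ (Quotient.out (e i)) := mkQ_eq.2 (by
        simpa using hmem)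
      rw [mkQ_out, mkQ_out] at this
      exact this.symm
    · intro hall
      by_contra hfin
      rw [not_infinite_iff_finite] at hfin
      obtain ⟨g, hg⟩ := hall (Nat.card (rQuot Λ) + 1)
      have hinj : Function.Injective (fun i : Fin (Nat.card (rQuot Λ) + 1) => mkQ Λ (g i)) := by
        intro i j hij
        by_contra hne
        exact hg j i (fun e => hne e.symm) (mkQ_eq.1 hij)
      have hle := Nat.card_le_card_of_injective _ hinj
      simp only [Nat.card_eq_fintype_card, Fintype.card_fin] at hle
      omega
  rw [heq]
  refine IsGδ.iInter fun n => IsOpen.isGδ ?_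
  exact isOpen_iUnion fun g => (isClopen_pairSet n g).isOpen

theorem isGδ_preimage {X Y : Type*} [TopologicalSpace X] [TopologicalSpace Y] {f : X → Y}
    (hf : Continuous f) {s : Set Y} (hs : IsGδ s) : IsGδ (f ⁻¹' s) := by
  obtain ⟨T, hT, hTc, rfl⟩ := hs
  rw [preimage_sInter]
  exact IsGδ.biInter hTc fun t ht => ((hT t ht).preimage hf).isGδ

/-! ### High transitivity from condition (*) -/

theorem pair_of_injective {d : ℕ} {Λ : Subgroup Γ} {x : Fin d → rQuot Λ}
    (hx : Function.Injective x) :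
    ∀ i j, i ≠ j → (Quotient.out (x i)) * (Quotient.out (x j))⁻¹ ∉ Λ := by
  intro i j hij hmem
  apply hij
  apply hx
  have : mkQ Λ (Quotient.out (x j)) = mkQ Λ (Quotient.out (x i)) := mkQ_eq.2 hmem
  rw [mkQ_out, mkQ_out] at this
  exact this.symm

/-- If `Λ` has infinite index and satisfies the conclusion of condition (*) for all
good pairs, then the action on `Λ\Γ` is highly transitive. -/
theorem htcoset_of (Λ : Subgroup Γ) (hinf : Infinite (rQuot Λ))
    (hc : ∀ d : ℕ, ∀ g h : Fin d → Γ, goodPair d g h Λ →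
      ∃ γ : Γ, ∀ i, g i * γ * (h i)⁻¹ ∈ Λ) : HTcoset Λ := by
  intro d _ x y hx hy
  haveI := hinf
  set g : Fin d → Γ := fun i => Quotient.out (x i) with hgdef
  set h : Fin d → Γ := fun i => Quotient.out (y i) with hhdef
  have hgx : ∀ i, mkQ Λ (g i) = x i := fun i => mkQ_out _
  have hhy : ∀ i, mkQ Λ (h i) = y i := fun i => mkQ_out _
  have hS : (Set.range x ∪ Set.range y).Finite := (finite_range x).union (finite_range y)
  have hcompl : (Set.range x ∪ Set.range y)ᶜ.Infinite := hS.infinite_compl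
  haveI := hcompl.to_subtype
  let e : Fin d ↪ ((Set.range x ∪ Set.range y)ᶜ : Set (rQuot Λ)) :=
    Fin.valEmbedding.trans (Infinite.natEmbedding _)
  let z : Fin d → rQuot Λ := fun i => (e i : rQuot Λ)
  have hzinj : Function.Injective z := fun i j hij => e.injective (Subtype.ext hij)
  have hznot : ∀ i, z i ∉ Set.range x ∪ Set.range y := fun i => (e i).2
  let k : Fin d → Γ := fun i => Quotient.out (z i)
  have hkz : ∀ i, mkQ Λ (k i) = z i := fun i => mkQ_out _
  have cross1 : ∀ i j, g i * (k j)⁻¹ ∉ Λ := by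
    intro i j hmem
    have : mkQ Λ (k j) = mkQ Λ (g i) := mkQ_eq.2 hmem
    rw [hkz, hgx] at this
    exact hznot j (this ▸ Or.inl (mem_range_self i))
  have cross2 : ∀ i j, k i * (h j)⁻¹ ∉ Λ := by
    intro i j hmem
    have : mkQ Λ (h j) = mkQ Λ (k i) := mkQ_eq.2 hmem
    rw [hkz, hhy] at this
    exact hznot i (this.symm ▸ Or.inr (mem_range_self j))
  obtain ⟨γ₁, hγ₁⟩ := hc d g k ⟨pair_of_injective hx, pair_of_injective hzinj, cross1⟩
  obtain ⟨γ₂, hγ₂⟩ := hc d k h ⟨pair_of_injective hzinj, pair_of_injective hy, cross2⟩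
  refine ⟨γ₁ * γ₂, fun i => ?_⟩
  rw [← hgx i, ← hhy i, rAct_mkQ, mkQ_eq]
  have key : h i * (g i * (γ₁ * γ₂))⁻¹ =
      (k i * γ₂ * (h i)⁻¹)⁻¹ * (g i * γ₁ * (k i)⁻¹)⁻¹ := by group
  rw [key]
  exact Λ.mul_mem (Λ.inv_mem (hγ₂ i)) (Λ.inv_mem (hγ₁ i))

/-- Conversely, high transitivity produces the element required in condition (*). -/
theorem exists_of_htcoset {Λ : Subgroup Γ} (hht : HTcoset Λ) {d : ℕ} (hd : 1 ≤ d)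
    {g h : Fin d → Γ} (hgp : goodPair d g h Λ) :
    ∃ γ : Γ, ∀ i, g i * γ * (h i)⁻¹ ∈ Λ := by
  obtain ⟨hg, hh, -⟩ := hgp
  have hxinj : Function.Injective (fun i => mkQ Λ (g i)) := by
    intro i j hij
    by_contra hne
    exact hg j i (fun e => hne e.symm) (mkQ_eq.1 hij)
  have hyinj : Function.Injective (fun i => mkQ Λ (h i)) := by
    intro i j hij
    by_contra hne
    exact hh j i (fun e => hne e.symm) (mkQ_eq.1 hij)
  obtain ⟨γ, hγ⟩ := hht d hd _ _ hxinj hyinj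
  refine ⟨γ, fun i => ?_⟩
  have := hγ i
  rw [rAct_mkQ, mkQ_eq] at this
  have key : g i * γ * (h i)⁻¹ = (h i * (g i * γ)⁻¹)⁻¹ := by group
  rw [key]
  exact Λ.inv_mem this

end HTaux

/-- Lemma "HT and Baire": for a countable group `Γ` and a `Gδ` subset `P` of
`Sub_[∞](Γ)` (a `Gδ` subset of the subspace of infinite index subgroups),
`HT(Γ) ∩ P` is dense in `P` if and only if Condition (*) holds. -/
theorem HTset_dense_iff (Γ : Type*) [Group Γ] [Countable Γ] (P : Set (Subgroup Γ))
    (hPGδ : ∃ T : Set (Subgroup Γ), IsGδ T ∧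
      P = T ∩ {Λ : Subgroup Γ | Infinite (rQuot Λ)}) :
    P ⊆ closure (HTset Γ ∩ P) ↔
      ∀ Λ ∈ P, ∀ d : ℕ, 1 ≤ d → ∀ g h : Fin d → Γ,
        (∀ i j, i ≠ j → g i * (g j)⁻¹ ∉ Λ) →
        (∀ i j, i ≠ j → h i * (h j)⁻¹ ∉ Λ) →
        (∀ i j, g i * (h j)⁻¹ ∉ Λ) →
        ∀ V ∈ nhds Λ, ∃ Λ' ∈ P ∩ V, ∃ γ : Γ, ∀ i, g i * γ * (h i)⁻¹ ∈ Λ' := by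
  classical
  obtain ⟨T, hTGδ, hPeq⟩ := hPGδ
  constructor
  · -- density implies condition (*)
    intro hdense Λ hΛ d hd g h hg hh hgh V hV
    obtain ⟨W, hWV, hWopen, hΛW⟩ := mem_nhds_iff.mp hV
    have hU : IsOpen ({Λ' : Subgroup Γ | HTaux.goodPair d g h Λ'} ∩ W) :=
      (HTaux.isClopen_goodPairSet d g h).isOpen.inter hWopen
    have hΛU : Λ ∈ {Λ' : Subgroup Γ | HTaux.goodPair d g h Λ'} ∩ W := ⟨⟨hg, hh, hgh⟩, hΛW⟩
    obtain ⟨Λ', ⟨hgp, hW⟩, hHT, hP⟩ := mem_closure_iff.mp (hdense hΛ) _ hU hΛU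
    exact ⟨Λ', ⟨hP, hWV hW⟩, HTaux.exists_of_htcoset hHT.2 hd hgp⟩
  · -- condition (*) implies density, by the Baire category theorem
    intro hstar Λ hΛ
    haveI : PolishSpace (Subgroup Γ) := HTaux.polish
    have hPGδ' : IsGδ P := by rw [hPeq]; exact hTGδ.inter HTaux.isGδ_Sinf
    set D := closure P with hD
    haveI : PolishSpace ↥D := isClosed_closure.polishSpace
    letI := upgradeIsCompletelyMetrizable ↥D
    let F : (Σ d : ℕ, (Fin d → Γ) × (Fin d → Γ)) → Set ↥D := fun p =>
      Subtype.val ⁻¹' (HTaux.Oset p.1 p.2.1 p.2.2 ∩ P)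
    have hkey : ∀ p : Σ d : ℕ, (Fin d → Γ) × (Fin d → Γ),
        P ⊆ closure (HTaux.Oset p.1 p.2.1 p.2.2 ∩ P) := by
      rintro ⟨d, g, h⟩ Λ₀ hΛ₀
      rw [mem_closure_iff]
      intro V hVopen hΛ₀V
      by_cases hgp : HTaux.goodPair d g h Λ₀
      · rcases Nat.eq_zero_or_pos d with hd0 | hd1
        · subst hd0
          exact ⟨Λ₀, hΛ₀V, fun _ => ⟨1, fun i => i.elim0⟩, hΛ₀⟩
        · obtain ⟨Λ', ⟨hΛ'P, hΛ'V⟩, γ, hγ⟩ :=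
            hstar Λ₀ hΛ₀ d hd1 g h hgp.1 hgp.2.1 hgp.2.2 V (hVopen.mem_nhds hΛ₀V)
          exact ⟨Λ', hΛ'V, fun _ => ⟨γ, hγ⟩, hΛ'P⟩
      · exact ⟨Λ₀, hΛ₀V, fun hgp' => absurd hgp' hgp, hΛ₀⟩
    have hGδ : ∀ p, IsGδ (F p) := fun p =>
      HTaux.isGδ_preimage continuous_subtype_val
        (((HTaux.isOpen_Oset p.1 p.2.1 p.2.2).isGδ).inter hPGδ')
    have himg : ∀ p, Subtype.val '' (F p) = HTaux.Oset p.1 p.2.1 p.2.2 ∩ P := by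
      intro p
      rw [Set.image_preimage_eq_inter_range, Subtype.range_coe]
      exact inter_eq_self_of_subset_left ((inter_subset_right).trans subset_closure)
    have hDense : ∀ p, Dense (F p) := by
      intro p x
      rw [closure_subtype, himg p]
      exact closure_minimal (hkey p) isClosed_closure x.2
    have hdense2 := dense_iInter_of_Gδ hGδ hDense
    have hx := hdense2 ⟨Λ, subset_closure hΛ⟩
    rw [closure_subtype] at hx
    refine closure_mono ?_ hx
    rintro Λ'' ⟨z, hz, rfl⟩
    simp only [Set.mem_iInter, Set.mem_preimage, F] at hz
    have hP'' : (z : Subgroup Γ) ∈ P := (hz ⟨0, fun i => i.elim0, fun i => i.elim0⟩).2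
    have hinf : Infinite (rQuot (z : Subgroup Γ)) := by
      have := hP''
      rw [hPeq] at this
      exact this.2
    refine ⟨⟨hinf, HTaux.htcoset_of _ hinf ?_⟩, hP''⟩
    intro d g h hgp
    exact (hz ⟨d, g, h⟩).1 hgp
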